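/- Let (X, d) be a metric space, S a nonempty finite subset of X, k ≥ 2 an integer, c_1, …, c_k a farthest-point greedy sequence of length k on S, and D ≥ 0. If for some index j with 2 ≤ j ≤ k the greedy gain satisfies d(c_j, {c_1, …, c_{j−1}}) ≤ D, then every point of S is within distance D of the set {c_1, …, c_k}. (In particular, if two of the greedy centers are within distance D of each other, then all points of S are within D of the chosen centers.) -/

import Mathlib

open Metric

/-- `c : Fin k → X` is a farthest-point greedy sequence of length `k` on the
finite set `S`: each `c i` lies in `S`, and for `i ≥ 1` (0-indexed), every
point of `S` is no farther from the previously chosen centers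
`{c j : j < i}` than `c i` is. -/
def IsGreedySeq {X : Type*} [MetricSpace X] (S : Finset X) (k : ℕ)
    (c : Fin k → X) : Prop :=
  (∀ i, c i ∈ S) ∧
  ∀ i : Fin k, 0 < (i : ℕ) → ∀ s ∈ S,
    infDist s (c '' {j | j < i}) ≤ infDist (c i) (c '' {j | j < i})

/-- If at some step the greedy gain of a farthest-point greedy sequence is at
most `D`, then every point of `S` is within distance `D` of the chosen
centers.  (Centers are 0-indexed, so `j` with `1 ≤ j` corresponds to a
1-indexed step between `2` and `k`.) -/
theorem greedy_gain_bounds_radius {X : Type*} [MetricSpace X]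
    (S : Finset X) (hSne : S.Nonempty) (k : ℕ) (hk : 2 ≤ k)
    (c : Fin k → X) (hgreedy : IsGreedySeq S k c) (D : ℝ) (hD : 0 ≤ D)
    (j : Fin k) (hj : 1 ≤ (j : ℕ))
    (hgain : infDist (c j) (c '' {l | l < j}) ≤ D) :
    ∀ s ∈ S, ∃ i : Fin k, dist s (c i) ≤ D := by
  intro s hs
  set T : Set X := c '' {l | l < j} with hT
  have hTne : T.Nonempty := by
    refine ⟨c ⟨0, lt_of_lt_of_le (by omega) j.2.le⟩, ⟨_, ?_, rfl⟩⟩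
    simp only [Set.mem_setOf_eq]
    exact Fin.lt_def.mpr (by show 0 < (j : ℕ); omega)
  have hfin : T.Finite := (Set.finite_univ.subset (Set.subset_univ _)).image c |>.subset
    (Set.image_mono (Set.subset_univ _))
  have hle : infDist s T ≤ D :=
    le_trans (hgreedy.2 j (by omega) s hs) hgain
  obtain ⟨y, hyT, hy⟩ := hfin.isCompact.exists_infDist_eq_dist hTne s
  obtain ⟨l, hl, rfl⟩ := hyT
  exact ⟨l, by rw [← hy]; exact hle⟩
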